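/- For every δ ∈ (0,1] and all even integers 2 ≤ p₁ < p₂ there exists δ' > 0 with the following property: for every probability space and every random variable X with |X| ≤ 1 almost surely, if (E[X^{p₁}])^{1/p₁} ≤ (E[X^{p₂}])^{1/p₂} − δ, then E[(X − E[X])²] ≥ δ'. -/

import Mathlib

open MeasureTheory

universe u

lemma abs_pow_sub_pow_le_mul_abs_sub (x y : ℝ) (hx : |x| ≤ 1) (hy : |y| ≤ 1) :
    ∀ n : ℕ, |x ^ n - y ^ n| ≤ n * |x - y| := by
  intro n
  induction n with
  | zero => simp
  | succ n ih =>
    have h1 : x ^ (n + 1) - y ^ (n + 1) = x * (x ^ n - y ^ n) + (x - y) * y ^ n := by ring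
    have h2 : |x * (x ^ n - y ^ n)| ≤ |x ^ n - y ^ n| := by
      rw [abs_mul]
      nlinarith [abs_nonneg (x ^ n - y ^ n), abs_nonneg x]
    have hyn : |y| ^ n ≤ 1 := pow_le_one₀ (abs_nonneg y) hy
    have h3 : |(x - y) * y ^ n| ≤ |x - y| := by
      rw [abs_mul, abs_pow]
      nlinarith [abs_nonneg (x - y), pow_nonneg (abs_nonneg y) n]
    calc |x ^ (n + 1) - y ^ (n + 1)|
        ≤ |x * (x ^ n - y ^ n)| + |(x - y) * y ^ n| := by rw [h1]; exact abs_add_le _ _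
      _ ≤ n * |x - y| + |x - y| := by linarith
      _ = (n + 1 : ℕ) * |x - y| := by push_cast; ring

/-- For every `δ ∈ (0,1]` and all even integers `2 ≤ p₁ < p₂` there is a `δ' > 0` such
that for every probability space and every random variable `X` with `|X| ≤ 1` a.s.,
if `(E[X^{p₁}])^{1/p₁} ≤ (E[X^{p₂}])^{1/p₂} - δ`, then `E[(X - E[X])²] ≥ δ'`. -/
theorem variance_lower_bound_of_moment_gap
    (δ : ℝ) (hδ0 : 0 < δ) (hδ1 : δ ≤ 1)
    (p₁ p₂ : ℕ) (he₁ : Even p₁) (he₂ : Even p₂) (hp₁ : 2 ≤ p₁) (hp₁₂ : p₁ < p₂) :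
    ∃ δ' > (0 : ℝ), ∀ (Ω : Type u) [MeasureSpace Ω],
      IsProbabilityMeasure (volume : Measure Ω) →
      ∀ X : Ω → ℝ, Measurable X → (∀ᵐ ω, |X ω| ≤ 1) →
      (∫ ω, X ω ^ p₁) ^ ((p₁ : ℝ)⁻¹) ≤ (∫ ω, X ω ^ p₂) ^ ((p₂ : ℝ)⁻¹) - δ →
      δ' ≤ ∫ ω, (X ω - ∫ ω', X ω') ^ 2 := by
  have hp₁0 : p₁ ≠ 0 := by omega
  have hp₂0 : p₂ ≠ 0 := by omega
  have hp₂pos : (0 : ℝ) < (p₂ : ℝ) := by positivity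
  refine ⟨(δ ^ p₂ / p₂) ^ 2, by positivity, ?_⟩
  intro Ω _ hprob X hXm hX1 hmom
  -- basic integrability facts
  have intX : Integrable X := by
    refine (integrable_const (1 : ℝ)).mono' hXm.aestronglyMeasurable ?_
    filter_upwards [hX1] with ω h using by simpa [Real.norm_eq_abs] using h
  have intXp : ∀ n : ℕ, Integrable (fun ω => X ω ^ n) := by
    intro n
    refine (integrable_const (1 : ℝ)).mono' (hXm.pow_const n).aestronglyMeasurable ?_
    filter_upwards [hX1] with ω h
    simpa [Real.norm_eq_abs, abs_pow] using pow_le_one₀ (abs_nonneg _) h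
  set μX : ℝ := ∫ ω, X ω with hμX
  have hμ1 : |μX| ≤ 1 := by
    have h1 : |μX| ≤ ∫ ω, |X ω| := by
      simpa [Real.norm_eq_abs] using norm_integral_le_integral_norm (μ := volume) X
    have h2 : (∫ ω, |X ω|) ≤ ∫ _ω : Ω, (1 : ℝ) :=
      integral_mono_ae intX.abs (integrable_const 1) hX1
    simpa using h1.trans h2
  have intY : Integrable (fun ω => X ω - μX) := intX.sub (integrable_const μX)
  have intAbsY : Integrable (fun ω => |X ω - μX|) := intY.abs
  have intY2 : Integrable (fun ω => (X ω - μX) ^ 2) := by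
    refine (integrable_const (4 : ℝ)).mono' ?_ ?_
    · exact ((hXm.sub measurable_const).pow_const 2).aestronglyMeasurable
    · filter_upwards [hX1] with ω h
      have := abs_sub_abs_le_abs_sub (X ω) μX
      rw [Real.norm_eq_abs, abs_pow]
      have h2 : |X ω - μX| ≤ 2 := by
        calc |X ω - μX| ≤ |X ω| + |μX| := abs_sub _ _
          _ ≤ 2 := by linarith
      nlinarith [abs_nonneg (X ω - μX)]
  -- Jensen: μX ^ p₁ ≤ ∫ X ^ p₁
  have hJensen : μX ^ p₁ ≤ ∫ ω, X ω ^ p₁ := by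
    have := (he₁.convexOn_pow (𝕜 := ℝ)).map_integral_le
      (continuous_pow p₁).continuousOn isClosed_univ
      (Filter.Eventually.of_forall fun ω => Set.mem_univ (X ω)) intX
      (by simpa [Function.comp_def] using intXp p₁)
    simpa using this
  have hb1 : (0 : ℝ) ≤ ∫ ω, X ω ^ p₁ :=
    le_trans (he₁.pow_nonneg μX) hJensen
  -- |μX| ≤ (∫ X ^ p₁)^(1/p₁)
  have habs : |μX| ≤ (∫ ω, X ω ^ p₁) ^ ((p₁ : ℝ)⁻¹) := by
    have h1 : |μX| ^ p₁ ≤ ∫ ω, X ω ^ p₁ := by rwa [he₁.pow_abs]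
    calc |μX| = ((|μX| ^ p₁) ^ ((p₁ : ℝ)⁻¹)) :=
          (Real.pow_rpow_inv_natCast (abs_nonneg _) hp₁0).symm
      _ ≤ (∫ ω, X ω ^ p₁) ^ ((p₁ : ℝ)⁻¹) :=
          Real.rpow_le_rpow (pow_nonneg (abs_nonneg _) _) h1 (by positivity)
  have hgap : |μX| + δ ≤ (∫ ω, X ω ^ p₂) ^ ((p₂ : ℝ)⁻¹) := by linarith
  have ha0 : (0 : ℝ) ≤ ∫ ω, X ω ^ p₂ :=
    integral_nonneg fun ω => he₂.pow_nonneg _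
  -- raise to the p₂-th power
  have h4 : (|μX| + δ) ^ p₂ ≤ ∫ ω, X ω ^ p₂ := by
    calc (|μX| + δ) ^ p₂ ≤ ((∫ ω, X ω ^ p₂) ^ ((p₂ : ℝ)⁻¹)) ^ p₂ :=
          pow_le_pow_left₀ (by positivity) hgap _
      _ = ∫ ω, X ω ^ p₂ := Real.rpow_inv_natCast_pow ha0 hp₂0
  have h5 : |μX| ^ p₂ + δ ^ p₂ ≤ (|μX| + δ) ^ p₂ :=
    pow_add_pow_le (abs_nonneg _) hδ0.le hp₂0
  -- pointwise bound and integration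
  have hpt : ∀ᵐ ω, X ω ^ p₂ ≤ μX ^ p₂ + (p₂ : ℝ) * |X ω - μX| := by
    filter_upwards [hX1] with ω h
    have := abs_pow_sub_pow_le_mul_abs_sub (X ω) μX h hμ1 p₂
    have h2 := le_abs_self (X ω ^ p₂ - μX ^ p₂)
    linarith
  have h6 : (∫ ω, X ω ^ p₂) ≤ μX ^ p₂ + (p₂ : ℝ) * ∫ ω, |X ω - μX| := by
    have hint : Integrable (fun ω => μX ^ p₂ + (p₂ : ℝ) * |X ω - μX|) :=
      (integrable_const _).add (intAbsY.const_mul _)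
    have := integral_mono_ae (intXp p₂) hint hpt
    rwa [integral_add (integrable_const _) (intAbsY.const_mul _),
      integral_const, integral_const_mul, probReal_univ,
      smul_eq_mul, one_mul] at this
  set m : ℝ := ∫ ω, |X ω - μX| with hm
  have h7 : δ ^ p₂ ≤ (p₂ : ℝ) * m := by
    have hμp : μX ^ p₂ = |μX| ^ p₂ := (he₂.pow_abs μX).symm
    nlinarith [h4, h5, h6]
  have hm_lb : δ ^ p₂ / (p₂ : ℝ) ≤ m := by
    rw [div_le_iff₀ hp₂pos]; linarith
  -- (∫ |Y|)² ≤ ∫ Y²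
  have hcs : m ^ 2 ≤ ∫ ω, (X ω - μX) ^ 2 := by
    have h0 : (0 : ℝ) ≤ ∫ ω, (|X ω - μX| - m) ^ 2 :=
      integral_nonneg fun ω => sq_nonneg _
    have hexp : (fun ω => (|X ω - μX| - m) ^ 2)
        = fun ω => (X ω - μX) ^ 2 - (2 * m) * |X ω - μX| + m ^ 2 := by
      funext ω
      have : |X ω - μX| ^ 2 = (X ω - μX) ^ 2 := sq_abs _
      nlinarith [this]
    have hint1 : Integrable (fun ω => (X ω - μX) ^ 2 - 2 * m * |X ω - μX|) :=
      intY2.sub (intAbsY.const_mul _)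
    rw [hexp, integral_add hint1 (integrable_const _),
      integral_sub intY2 (intAbsY.const_mul _), integral_const_mul, integral_const,
      probReal_univ, smul_eq_mul, one_mul] at h0
    nlinarith [h0]
  have hmain : (δ ^ p₂ / (p₂ : ℝ)) ^ 2 ≤ m ^ 2 :=
    pow_le_pow_left₀ (by positivity) hm_lb 2
  calc (δ ^ p₂ / (p₂ : ℝ)) ^ 2 ≤ m ^ 2 := hmain
    _ ≤ ∫ ω, (X ω - μX) ^ 2 := hcs
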